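/- arXiv:2307.14927 — 3 statements merged into one kernel-verified Lean document; each statement's English description precedes it below -/
import Mathlib

section
/- Let K, s, r be positive integers with s | K, s | (r-1), and (r-1)/s + 1 ≤ K/s; set Λ = K/s and t = (r-1)/s. With the storage assignment D_{(i,C,T)} = G_i[C] ∪ (⋃_{j≠i} G_j[T]) over all valid tuples (i,C,T), each node k ∈ [K] stores exactly C(Λ-1, t)·(st+1) input files, i.e., |{(i,C,T) : k ∈ D_{(i,C,T)}}| = C(Λ-1, t)·(st+1). -/
/-- The index set of input files: tuples (i, C, T). -/
def tuples (Λ s t : ℕ) : Finset (ℕ × Finset ℕ × Finset ℕ) :=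
  (Finset.Icc 1 s).biUnion fun i =>
    ((Finset.Icc 1 Λ).powersetCard (t + 1)).biUnion fun C =>
      (C.powersetCard t).image fun T => (i, C, T)

/-- G_i[S] = {(i-1)Λ + x : x ∈ S}. -/
def Gset (Λ i : ℕ) (S : Finset ℕ) : Finset ℕ := S.image fun x => (i - 1) * Λ + x

/-- The storage set D_{(i,C,T)} = G_i[C] ∪ (⋃_{j ∈ [s]\{i}} G_j[T]). -/
def Dset (Λ s i : ℕ) (C T : Finset ℕ) : Finset ℕ :=
  Gset Λ i C ∪ ((Finset.Icc 1 s).erase i).biUnion fun j => Gset Λ j T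

lemma card_filter_mem_powersetCard (A : Finset ℕ) (a : ℕ) (ha : a ∈ A) (n : ℕ) :
    ((A.powersetCard (n+1)).filter (fun S => a ∈ S)).card = (A.card - 1).choose n := by
  rw [← Finset.card_erase_of_mem ha, ← Finset.card_powersetCard n (A.erase a)]
  apply Finset.card_nbij' (fun S => S.erase a) (fun S => insert a S)
  · intro S hS
    simp only [Finset.mem_coe, Finset.mem_filter, Finset.mem_powersetCard] at hS
    obtain ⟨⟨hsub, hcard⟩, haS⟩ := hS
    rw [Finset.mem_coe, Finset.mem_powersetCard]
    refine ⟨fun y hy => Finset.mem_erase.mpr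
      ⟨(Finset.mem_erase.mp hy).1, hsub (Finset.mem_erase.mp hy).2⟩, ?_⟩
    rw [Finset.card_erase_of_mem haS, hcard]
    omega
  · intro S hS
    rw [Finset.mem_coe, Finset.mem_powersetCard] at hS
    obtain ⟨hsub, hcard⟩ := hS
    have haS : a ∉ S := fun h => (Finset.mem_erase.mp (hsub h)).1 rfl
    simp only [Finset.mem_coe, Finset.mem_filter, Finset.mem_powersetCard]
    refine ⟨⟨?_, ?_⟩, Finset.mem_insert_self a S⟩
    · intro y hy
      rcases Finset.mem_insert.mp hy with rfl | h
      · exact ha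
      · exact (Finset.mem_erase.mp (hsub h)).2
    · rw [Finset.card_insert_of_notMem haS, hcard]
  · intro S hS
    simp only [Finset.mem_coe, Finset.mem_filter] at hS
    exact Finset.insert_erase hS.2
  · intro S hS
    rw [Finset.mem_coe, Finset.mem_powersetCard] at hS
    exact Finset.erase_insert (fun h => (Finset.mem_erase.mp (hS.1 h)).1 rfl)

lemma decomp_unique {Λ i j x y : ℕ} (hΛ : 0 < Λ)
    (hx : x ∈ Finset.Icc 1 Λ) (hy : y ∈ Finset.Icc 1 Λ)
    (h : (i - 1) * Λ + x = (j - 1) * Λ + y) : i - 1 = j - 1 ∧ x = y := by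
  simp only [Finset.mem_Icc] at hx hy
  have h1 : ((i - 1) * Λ + (x - 1)) / Λ = i - 1 := by
    rw [Nat.mul_comm, Nat.mul_add_div hΛ, Nat.div_eq_of_lt (by omega)]; omega
  have h2 : ((j - 1) * Λ + (y - 1)) / Λ = j - 1 := by
    rw [Nat.mul_comm, Nat.mul_add_div hΛ, Nat.div_eq_of_lt (by omega)]; omega
  have heq : (i - 1) * Λ + (x - 1) = (j - 1) * Λ + (y - 1) := by omega
  have hij : i - 1 = j - 1 := by rw [← h1, ← h2, heq]
  refine ⟨hij, ?_⟩
  rw [hij] at h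
  omega

lemma mem_Gset_iff {Λ i j x : ℕ} (hΛ : 0 < Λ) {S : Finset ℕ}
    (hS : S ⊆ Finset.Icc 1 Λ) (hx : x ∈ Finset.Icc 1 Λ) :
    (j - 1) * Λ + x ∈ Gset Λ i S ↔ i - 1 = j - 1 ∧ x ∈ S := by
  unfold Gset
  simp only [Finset.mem_image]
  constructor
  · rintro ⟨y, hyS, hy⟩
    obtain ⟨hij, hxy⟩ := decomp_unique hΛ (hS hyS) hx hy
    exact ⟨hij, hxy ▸ hyS⟩
  · rintro ⟨hij, hxS⟩
    exact ⟨x, hxS, by rw [hij]⟩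

theorem stmt_2 (K s r : ℕ) (hK : 0 < K) (hs : 0 < s) (hr : 0 < r)
    (hdvdK : s ∣ K) (hdvdr : s ∣ (r - 1))
    (Λ t : ℕ) (hΛ : Λ = K / s) (ht : t = (r - 1) / s) (htΛ : t + 1 ≤ Λ)
    (k : ℕ) (hk : k ∈ Finset.Icc 1 K) :
    ((tuples Λ s t).filter fun p => k ∈ Dset Λ s p.1 p.2.1 p.2.2).card
      = (Λ - 1).choose t * (s * t + 1) := by
  have hΛpos : 0 < Λ := by omega
  have hKeq : K = Λ * s := by rw [hΛ, Nat.div_mul_cancel hdvdK]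
  simp only [Finset.mem_Icc] at hk
  -- decompose k
  obtain ⟨j, x, hjmem, hxmem, hkdec⟩ :
      ∃ j x, j ∈ Finset.Icc 1 s ∧ x ∈ Finset.Icc 1 Λ ∧ k = (j - 1) * Λ + x := by
    refine ⟨(k - 1) / Λ + 1, (k - 1) % Λ + 1, ?_, ?_, ?_⟩
    · simp only [Finset.mem_Icc]
      have h2 : (k - 1) / Λ < s := Nat.div_lt_of_lt_mul (show k - 1 < Λ * s by omega)
      exact ⟨Nat.succ_le_succ (Nat.zero_le _), h2⟩
    · simp only [Finset.mem_Icc]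
      have := Nat.mod_lt (k - 1) hΛpos
      omega
    · have h' : Λ * ((k - 1) / Λ) + (k - 1) % Λ = k - 1 := Nat.div_add_mod _ _
      have hj1 : ((k - 1) / Λ + 1 - 1) * Λ = Λ * ((k - 1) / Λ) := by
        rw [Nat.mul_comm]
        congr 1
      omega
  -- membership characterization
  have hmem : ∀ i ∈ Finset.Icc 1 s, ∀ C ∈ (Finset.Icc 1 Λ).powersetCard (t + 1),
      ∀ T ∈ C.powersetCard t,
      (k ∈ Dset Λ s i C T ↔ (i = j ∧ x ∈ C) ∨ (i ≠ j ∧ x ∈ T)) := by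
    intro i hi C hC T hT
    rw [Finset.mem_powersetCard] at hC hT
    have hTsub : T ⊆ Finset.Icc 1 Λ := hT.1.trans hC.1
    simp only [Finset.mem_Icc] at hi hjmem
    unfold Dset
    rw [hkdec, Finset.mem_union, mem_Gset_iff hΛpos hC.1 hxmem, Finset.mem_biUnion]
    constructor
    · rintro (⟨hij, hxC⟩ | ⟨j', hj', hGj'⟩)
      · exact Or.inl ⟨by omega, hxC⟩
      · rw [mem_Gset_iff hΛpos hTsub hxmem] at hGj'
        rw [Finset.mem_erase, Finset.mem_Icc] at hj'
        refine Or.inr ⟨?_, hGj'.2⟩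
        have := hGj'.1
        omega
    · rintro (⟨rfl, hxC⟩ | ⟨hij, hxT⟩)
      · exact Or.inl ⟨rfl, hxC⟩
      · refine Or.inr ⟨j, ?_, ?_⟩
        · rw [Finset.mem_erase, Finset.mem_Icc]
          exact ⟨fun h => hij h.symm, hjmem⟩
        · rw [mem_Gset_iff hΛpos hTsub hxmem]
          exact ⟨rfl, hxT⟩
  -- reduce to a double sum
  have h1 : ((tuples Λ s t).filter fun p => k ∈ Dset Λ s p.1 p.2.1 p.2.2).card
      = ∑ i ∈ Finset.Icc 1 s, ∑ C ∈ (Finset.Icc 1 Λ).powersetCard (t + 1),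
          ((C.powersetCard t).filter fun T => k ∈ Dset Λ s i C T).card := by
    unfold tuples
    rw [Finset.filter_biUnion, Finset.card_biUnion]
    · apply Finset.sum_congr rfl
      intro i _
      rw [Finset.filter_biUnion, Finset.card_biUnion]
      · apply Finset.sum_congr rfl
        intro C _
        rw [Finset.filter_image, Finset.card_image_of_injective]
        intro a b hab
        simpa using hab
      · intro C1 h1 C2 h2 hne
        rw [Function.onFun, Finset.disjoint_left]
        intro a ha1 ha2
        simp only [Finset.mem_filter, Finset.mem_image] at ha1 ha2
        obtain ⟨⟨T1, _, rfl⟩, _⟩ := ha1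
        obtain ⟨⟨T2, _, h⟩, _⟩ := ha2
        have h' : C2 = C1 := by simpa using congrArg (fun p => p.2.1) h
        exact hne h'.symm
    · intro i1 h1 i2 h2 hne
      rw [Function.onFun, Finset.disjoint_left]
      intro a ha1 ha2
      simp only [Finset.mem_filter, Finset.mem_biUnion, Finset.mem_image] at ha1 ha2
      obtain ⟨⟨C1, _, T1, _, rfl⟩, _⟩ := ha1
      obtain ⟨⟨C2, _, T2, _, h⟩, _⟩ := ha2
      have h' : i2 = i1 := by simpa using congrArg (fun p => p.1) h
      exact hne h'.symm
  rw [h1]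
  have hcardIcc : (Finset.Icc 1 Λ).card = Λ := by rw [Nat.card_Icc]; omega
  have hcount : (((Finset.Icc 1 Λ).powersetCard (t + 1)).filter
      (fun C => x ∈ C)).card = (Λ - 1).choose t := by
    rw [card_filter_mem_powersetCard _ _ hxmem t, hcardIcc]
  -- value of inner sum for i = j
  have hFj : ∑ C ∈ (Finset.Icc 1 Λ).powersetCard (t + 1),
      ((C.powersetCard t).filter fun T => k ∈ Dset Λ s j C T).card
      = (Λ - 1).choose t * (t + 1) := by
    have hstep : ∀ C ∈ (Finset.Icc 1 Λ).powersetCard (t + 1),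
        ((C.powersetCard t).filter fun T => k ∈ Dset Λ s j C T).card
        = if x ∈ C then t + 1 else 0 := by
      intro C hC
      have hfc : ((C.powersetCard t).filter fun T => k ∈ Dset Λ s j C T)
          = (C.powersetCard t).filter fun _ => x ∈ C := by
        apply Finset.filter_congr
        intro T hT
        rw [hmem j hjmem C hC T hT]
        simp
      rw [hfc, Finset.filter_const]
      split_ifs with hxC
      · rw [Finset.card_powersetCard, (Finset.mem_powersetCard.mp hC).2,
          Nat.choose_succ_self_right]
      · simp
    rw [Finset.sum_congr rfl hstep, ← Finset.sum_filter, Finset.sum_const,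
      smul_eq_mul, hcount]
  -- value of inner sum for i ≠ j
  have hFi : ∀ i, i ≠ j → i ∈ Finset.Icc 1 s →
      ∑ C ∈ (Finset.Icc 1 Λ).powersetCard (t + 1),
        ((C.powersetCard t).filter fun T => k ∈ Dset Λ s i C T).card
      = (Λ - 1).choose t * t := by
    intro i hij hi
    have hstep : ∀ C ∈ (Finset.Icc 1 Λ).powersetCard (t + 1),
        ((C.powersetCard t).filter fun T => k ∈ Dset Λ s i C T).card
        = if x ∈ C then t else 0 := by
      intro C hC
      have hfc : ((C.powersetCard t).filter fun T => k ∈ Dset Λ s i C T)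
          = (C.powersetCard t).filter fun T => x ∈ T := by
        apply Finset.filter_congr
        intro T hT
        rw [hmem i hi C hC T hT]
        simp [hij]
      rw [hfc]
      split_ifs with hxC
      · rcases ht' : t with _ | m
        · rw [Finset.card_eq_zero, Finset.filter_eq_empty_iff]
          intro T hT
          rw [Finset.powersetCard_zero, Finset.mem_singleton] at hT
          subst hT
          simp
        · rw [card_filter_mem_powersetCard C x hxC m,
            (Finset.mem_powersetCard.mp hC).2, Nat.add_sub_cancel, ht',
            Nat.choose_succ_self_right]
      · rw [Finset.card_eq_zero, Finset.filter_eq_empty_iff]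
        intro T hT
        exact fun hxT => hxC ((Finset.mem_powersetCard.mp hT).1 hxT)
    rw [Finset.sum_congr rfl hstep, ← Finset.sum_filter, Finset.sum_const,
      smul_eq_mul, hcount]
  -- put it together
  rw [← Finset.sum_erase_add _ _ hjmem, hFj,
    Finset.sum_congr rfl (fun i hi => hFi i (Finset.ne_of_mem_erase hi)
      (Finset.mem_of_mem_erase hi)),
    Finset.sum_const, smul_eq_mul, Finset.card_erase_of_mem hjmem, Nat.card_Icc]
  obtain ⟨s', rfl⟩ : ∃ s', s = s' + 1 := ⟨s - 1, by omega⟩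
  simp only [Nat.add_sub_cancel]
  ring
end

section
/- With K, s, r, Λ = K/s, t = (r-1)/s as above, the total storage across all nodes equals r times the number of input files: Σ_{k∈[K]} |{(i,C,T) : k ∈ D_{(i,C,T)}}| = r · s·(t+1)·C(Λ, t+1), i.e., the computation load of the scheme equals r. -/
lemma Gset_card (Λ i : ℕ) (S : Finset ℕ) : (Gset Λ i S).card = S.card :=
  Finset.card_image_of_injective _ (add_right_injective _)

lemma Gset_bounds {Λ i : ℕ} {S : Finset ℕ} (hS : S ⊆ Finset.Icc 1 Λ) {e : ℕ}
    (he : e ∈ Gset Λ i S) : (i - 1) * Λ < e ∧ e ≤ (i - 1) * Λ + Λ := by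
  simp only [Gset, Finset.mem_image] at he
  obtain ⟨x, hx, rfl⟩ := he
  have := hS hx
  simp only [Finset.mem_Icc] at this
  omega

lemma interval_le {Λ a b : ℕ} (ha : 1 ≤ a) (hab : a < b) :
    (a - 1) * Λ + Λ ≤ (b - 1) * Λ := by
  have h1 : (a - 1) * Λ + Λ = a * Λ := by
    cases a with
    | zero => omega
    | succ n => simp [Nat.succ_mul]
  rw [h1]
  exact Nat.mul_le_mul_right Λ (by omega)

lemma Gset_disjoint {Λ i j : ℕ} (hi : 1 ≤ i) (hj : 1 ≤ j) (hij : i ≠ j)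
    {S S' : Finset ℕ} (hS : S ⊆ Finset.Icc 1 Λ) (hS' : S' ⊆ Finset.Icc 1 Λ) :
    Disjoint (Gset Λ i S) (Gset Λ j S') := by
  rw [Finset.disjoint_left]
  intro e he he'
  obtain ⟨h1, h2⟩ := Gset_bounds hS he
  obtain ⟨h3, h4⟩ := Gset_bounds hS' he'
  rcases Nat.lt_or_ge i j with h | h
  · have := interval_le (Λ := Λ) hi h
    omega
  · have := interval_le (Λ := Λ) hj (by omega : j < i)
    omega

lemma Dset_card {Λ s i t : ℕ} (hi : i ∈ Finset.Icc 1 s)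
    {C T : Finset ℕ} (hC : C ⊆ Finset.Icc 1 Λ) (hCc : C.card = t + 1)
    (hT : T ⊆ C) (hTc : T.card = t) :
    (Dset Λ s i C T).card = t + 1 + (s - 1) * t := by
  simp only [Finset.mem_Icc] at hi
  have hTsub : T ⊆ Finset.Icc 1 Λ := hT.trans hC
  rw [Dset, Finset.card_union_of_disjoint, Finset.card_biUnion]
  · rw [Gset_card, hCc]
    have : ∑ j ∈ (Finset.Icc 1 s).erase i, (Gset Λ j T).card
        = ∑ j ∈ (Finset.Icc 1 s).erase i, t := by
      apply Finset.sum_congr rfl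
      intro j _
      rw [Gset_card, hTc]
    rw [this, Finset.sum_const, Finset.card_erase_of_mem (Finset.mem_Icc.mpr hi),
      Nat.card_Icc]
    simp [smul_eq_mul]
  · intro j1 hj1 j2 hj2 hne
    simp only [Finset.mem_coe, Finset.mem_erase, Finset.mem_Icc] at hj1 hj2
    exact Gset_disjoint hj1.2.1 hj2.2.1 hne hTsub hTsub
  · rw [Finset.disjoint_biUnion_right]
    intro j hj
    simp only [Finset.mem_erase, Finset.mem_Icc] at hj
    exact Gset_disjoint hi.1 hj.2.1 (Ne.symm hj.1) hC hTsub

lemma Dset_subset {Λ s i K : ℕ} (hK : K = s * Λ) (hi : i ∈ Finset.Icc 1 s)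
    {C T : Finset ℕ} (hC : C ⊆ Finset.Icc 1 Λ) (hT : T ⊆ C) :
    Dset Λ s i C T ⊆ Finset.Icc 1 K := by
  simp only [Finset.mem_Icc] at hi
  have hTsub : T ⊆ Finset.Icc 1 Λ := hT.trans hC
  intro e he
  have bound : ∀ j : ℕ, 1 ≤ j → j ≤ s → ∀ S : Finset ℕ, S ⊆ Finset.Icc 1 Λ →
      e ∈ Gset Λ j S → e ∈ Finset.Icc 1 K := by
    intro j hj1 hj2 S hS heS
    obtain ⟨h1, h2⟩ := Gset_bounds hS heS
    have h3 : (j - 1) * Λ + Λ ≤ s * Λ := by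
      calc (j - 1) * Λ + Λ = j * Λ := by
            cases j with
            | zero => omega
            | succ n => simp [Nat.succ_mul]
        _ ≤ s * Λ := Nat.mul_le_mul_right Λ hj2
    rw [Finset.mem_Icc]
    omega
  simp only [Dset, Finset.mem_union, Finset.mem_biUnion] at he
  rcases he with h | ⟨j, hj, h⟩
  · exact bound i hi.1 hi.2 C hC h
  · simp only [Finset.mem_erase, Finset.mem_Icc] at hj
    exact bound j hj.2.1 hj.2.2 T hTsub h

lemma tuples_card (Λ s t : ℕ) :
    (tuples Λ s t).card = s * ((t + 1) * Λ.choose (t + 1)) := by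
  rw [tuples, Finset.card_biUnion]
  · have inner : ∀ i : ℕ, (((Finset.Icc 1 Λ).powersetCard (t + 1)).biUnion fun C =>
        (C.powersetCard t).image fun T => (i, C, T)).card
        = (t + 1) * Λ.choose (t + 1) := by
      intro i
      rw [Finset.card_biUnion]
      · have : ∀ C ∈ (Finset.Icc 1 Λ).powersetCard (t + 1),
            ((C.powersetCard t).image fun T => (i, C, T)).card = t + 1 := by
          intro C hC
          rw [Finset.mem_powersetCard] at hC
          have hinj : Function.Injective (fun T : Finset ℕ => (i, C, T)) := by
            intro a b h
            simpa using congrArg (fun p : ℕ × Finset ℕ × Finset ℕ => p.2.2) h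
          rw [Finset.card_image_of_injective _ hinj,
            Finset.card_powersetCard, hC.2, Nat.choose_succ_self_right]
        rw [Finset.sum_congr rfl this, Finset.sum_const, Finset.card_powersetCard,
          Nat.card_Icc]
        simp [smul_eq_mul, mul_comm]
      · intro C1 h1 C2 h2 hne
        rw [Function.onFun, Finset.disjoint_left]
        intro p hp1 hp2
        simp only [Finset.mem_image] at hp1 hp2
        obtain ⟨T1, _, rfl⟩ := hp1
        obtain ⟨T2, _, h⟩ := hp2
        apply hne
        have := congrArg (fun q : ℕ × Finset ℕ × Finset ℕ => q.2.1) h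
        simpa using this.symm
    rw [Finset.sum_congr rfl fun i _ => inner i, Finset.sum_const, Nat.card_Icc]
    simp [smul_eq_mul]
  · intro i1 h1 i2 h2 hne
    rw [Function.onFun, Finset.disjoint_left]
    intro p hp1 hp2
    simp only [Finset.mem_biUnion, Finset.mem_image] at hp1 hp2
    obtain ⟨C1, _, T1, _, rfl⟩ := hp1
    obtain ⟨C2, _, T2, _, h⟩ := hp2
    apply hne
    have := congrArg (fun q : ℕ × Finset ℕ × Finset ℕ => q.1) h
    simpa using this.symm

lemma mem_tuples {Λ s t : ℕ} {p : ℕ × Finset ℕ × Finset ℕ} (hp : p ∈ tuples Λ s t) :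
    p.1 ∈ Finset.Icc 1 s ∧ p.2.1 ⊆ Finset.Icc 1 Λ ∧ p.2.1.card = t + 1 ∧
      p.2.2 ⊆ p.2.1 ∧ p.2.2.card = t := by
  simp only [tuples, Finset.mem_biUnion, Finset.mem_image, Finset.mem_powersetCard] at hp
  obtain ⟨i, hi, C, ⟨hC1, hC2⟩, T, hT, rfl⟩ := hp
  exact ⟨hi, hC1, hC2, hT.1, hT.2⟩

theorem stmt_3 (K s r : ℕ) (hK : 0 < K) (hs : 0 < s) (hr : 0 < r)
    (hdvdK : s ∣ K) (hdvdr : s ∣ (r - 1))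
    (Λ t : ℕ) (hΛ : Λ = K / s) (ht : t = (r - 1) / s) (htΛ : t + 1 ≤ Λ) :
    ∑ k ∈ Finset.Icc 1 K,
        ((tuples Λ s t).filter fun p => k ∈ Dset Λ s p.1 p.2.1 p.2.2).card
      = r * (s * (t + 1) * Λ.choose (t + 1)) := by
  have hKΛ : K = s * Λ := by rw [hΛ, Nat.mul_div_cancel' hdvdK]
  have hst : s * t = r - 1 := by rw [ht, Nat.mul_div_cancel' hdvdr]
  have hrst : r = s * t + 1 := by omega
  have swap : ∑ k ∈ Finset.Icc 1 K,
        ((tuples Λ s t).filter fun p => k ∈ Dset Λ s p.1 p.2.1 p.2.2).card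
      = ∑ p ∈ tuples Λ s t,
        ((Finset.Icc 1 K).filter fun k => k ∈ Dset Λ s p.1 p.2.1 p.2.2).card := by
    simp_rw [Finset.card_filter]
    exact Finset.sum_comm
  rw [swap]
  have step : ∀ p ∈ tuples Λ s t,
      ((Finset.Icc 1 K).filter fun k => k ∈ Dset Λ s p.1 p.2.1 p.2.2).card
        = t + 1 + (s - 1) * t := by
    intro p hp
    obtain ⟨h1, h2, h3, h4, h5⟩ := mem_tuples hp
    have hsub := Dset_subset hKΛ h1 h2 h4
    have : (Finset.Icc 1 K).filter (fun k => k ∈ Dset Λ s p.1 p.2.1 p.2.2)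
        = Dset Λ s p.1 p.2.1 p.2.2 := by
      rw [Finset.filter_mem_eq_inter, Finset.inter_eq_right]
      exact hsub
    rw [this]
    exact Dset_card h1 h2 h3 h4 h5
  rw [Finset.sum_congr rfl step, Finset.sum_const, smul_eq_mul, tuples_card]
  have hc : t + 1 + (s - 1) * t = r := by
    have hss : s - 1 + 1 = s := by omega
    have h2 : (s - 1 + 1) * t = (s - 1) * t + t := by ring
    rw [hss] at h2
    omega
  rw [hc]
  ring
end

section
/- With the same setup, for any tuple (i,C,T) and any q ∈ [Λ]: |A_q ∩ D_{(i,C,T)}| = 1 if and only if q is the unique element of C \ T. -/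
/-- A_q = {(i-1)Λ + q : i ∈ [s]}. -/
def Aset (Λ s q : ℕ) : Finset ℕ := (Finset.Icc 1 s).image fun i => (i - 1) * Λ + q

lemma block_eq {Λ j k x q : ℕ} (hj : 1 ≤ j) (hk : 1 ≤ k)
    (hx1 : 1 ≤ x) (hx2 : x ≤ Λ) (hq1 : 1 ≤ q) (hq2 : q ≤ Λ)
    (h : (k - 1) * Λ + x = (j - 1) * Λ + q) : k = j ∧ x = q := by
  obtain ⟨a, rfl⟩ : ∃ a, k = a + 1 := ⟨k - 1, by omega⟩
  obtain ⟨b, rfl⟩ : ∃ b, j = b + 1 := ⟨j - 1, by omega⟩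
  simp only [Nat.add_sub_cancel] at h
  have hab : a = b := by
    rcases lt_trichotomy a b with h' | h' | h'
    · exfalso
      have h1 : a + 1 ≤ b := h'
      nlinarith
    · exact h'
    · exfalso
      have h1 : b + 1 ≤ a := h'
      nlinarith
  subst hab
  omega

theorem stmt_6 (K s r : ℕ) (hK : 0 < K) (hs : 2 ≤ s) (hr : 0 < r)
    (hdvdK : s ∣ K) (hdvdr : s ∣ (r - 1))
    (Λ t : ℕ) (hΛ : Λ = K / s) (ht : t = (r - 1) / s)
    (i : ℕ) (C T : Finset ℕ)
    (hi : i ∈ Finset.Icc 1 s)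
    (hC : C ∈ (Finset.Icc 1 Λ).powersetCard (t + 1))
    (hT : T ∈ C.powersetCard t)
    (q : ℕ) (hq : q ∈ Finset.Icc 1 Λ) :
    (Aset Λ s q ∩ Dset Λ s i C T).card = 1 ↔ C \ T = {q} := by
  have hs0 : 0 < s := by omega
  have hsK : s ≤ K := Nat.le_of_dvd hK hdvdK
  have hΛ1 : 1 ≤ Λ := by
    subst hΛ
    exact (Nat.one_le_div_iff hs0).mpr hsK
  simp only [Finset.mem_powersetCard] at hC hT
  obtain ⟨hCsub, hCcard⟩ := hC
  obtain ⟨hTsub, hTcard⟩ := hT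
  simp only [Finset.mem_Icc] at hi hq
  have hCbd : ∀ x ∈ C, 1 ≤ x ∧ x ≤ Λ := fun x hx => Finset.mem_Icc.mp (hCsub hx)
  have hTbd : ∀ x ∈ T, 1 ≤ x ∧ x ≤ Λ := fun x hx => hCbd x (hTsub hx)
  have hsd : (C \ T).card = 1 := by
    rw [Finset.card_sdiff_of_subset hTsub]
    omega
  have hiff : C \ T = {q} ↔ (q ∈ C ∧ q ∉ T) := by
    constructor
    · intro h
      have hq' : q ∈ C \ T := by rw [h]; exact Finset.mem_singleton_self q
      exact Finset.mem_sdiff.mp hq'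
    · rintro ⟨h1, h2⟩
      obtain ⟨a, ha⟩ := Finset.card_eq_one.mp hsd
      have hq' : q ∈ C \ T := Finset.mem_sdiff.mpr ⟨h1, h2⟩
      rw [ha] at hq' ⊢
      rw [Finset.mem_singleton] at hq'
      rw [hq']
  rw [hiff]
  have hmem : ∀ a, a ∈ Aset Λ s q ∩ Dset Λ s i C T ↔
      ∃ j, 1 ≤ j ∧ j ≤ s ∧ a = (j - 1) * Λ + q ∧ ((j = i ∧ q ∈ C) ∨ (j ≠ i ∧ q ∈ T)) := by
    intro a
    simp only [Finset.mem_inter, Aset, Dset, Gset, Finset.mem_union, Finset.mem_image,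
      Finset.mem_biUnion, Finset.mem_erase, Finset.mem_Icc]
    constructor
    · rintro ⟨⟨j, ⟨hj1, hj2⟩, rfl⟩, hD⟩
      refine ⟨j, hj1, hj2, rfl, ?_⟩
      rcases hD with ⟨x, hxC, hx⟩ | ⟨k, ⟨hki, hk1, hk2⟩, x, hxT, hx⟩
      · obtain ⟨hij, hxq⟩ := block_eq hj1 hi.1 (hCbd x hxC).1 (hCbd x hxC).2 hq.1 hq.2 hx
        left
        exact ⟨hij.symm, hxq ▸ hxC⟩
      · obtain ⟨hkj, hxq⟩ := block_eq hj1 hk1 (hTbd x hxT).1 (hTbd x hxT).2 hq.1 hq.2 hx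
        right
        exact ⟨hkj ▸ hki, hxq ▸ hxT⟩
    · rintro ⟨j, hj1, hj2, rfl, hcase⟩
      refine ⟨⟨j, ⟨hj1, hj2⟩, rfl⟩, ?_⟩
      rcases hcase with ⟨rfl, hqC⟩ | ⟨hji, hqT⟩
      · left; exact ⟨q, hqC, rfl⟩
      · right; exact ⟨j, ⟨hji, hj1, hj2⟩, q, hqT, rfl⟩
  by_cases hqC : q ∈ C
  · by_cases hqT : q ∈ T
    · -- intersection = Aset, card = s ≥ 2
      have heq : Aset Λ s q ∩ Dset Λ s i C T = Aset Λ s q := by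
        apply Finset.Subset.antisymm (Finset.inter_subset_left)
        intro a ha
        rw [hmem]
        simp only [Aset, Finset.mem_image, Finset.mem_Icc] at ha
        obtain ⟨j, ⟨hj1, hj2⟩, rfl⟩ := ha
        refine ⟨j, hj1, hj2, rfl, ?_⟩
        by_cases hji : j = i
        · left; exact ⟨hji, hqC⟩
        · right; exact ⟨hji, hqT⟩
      have hcard : (Aset Λ s q).card = s := by
        rw [Aset, Finset.card_image_of_injOn, Nat.card_Icc]
        · omega
        · intro a ha b hb hab
          simp only [Finset.mem_coe, Finset.mem_Icc] at ha hb
          simp only at hab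
          exact (block_eq ha.1 hb.1 hq.1 hq.2 hq.1 hq.2 hab.symm).1.symm
      rw [heq, hcard]
      simp only [hqT, not_true_eq_false, and_false, iff_false]
      omega
    · -- intersection = {(i-1)Λ+q}
      have heq : Aset Λ s q ∩ Dset Λ s i C T = {(i - 1) * Λ + q} := by
        ext a
        rw [hmem, Finset.mem_singleton]
        constructor
        · rintro ⟨j, hj1, hj2, rfl, hcase⟩
          rcases hcase with ⟨rfl, _⟩ | ⟨_, hqT'⟩
          · rfl
          · exact absurd hqT' hqT
        · rintro rfl
          exact ⟨i, hi.1, hi.2, rfl, Or.inl ⟨rfl, hqC⟩⟩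
      rw [heq]
      simp [hqC, hqT]
  · -- intersection = ∅
    have hqT : q ∉ T := fun h => hqC (hTsub h)
    have heq : Aset Λ s q ∩ Dset Λ s i C T = ∅ := by
      ext a
      rw [hmem]
      simp only [Finset.notMem_empty, iff_false]
      rintro ⟨j, _, _, _, hcase⟩
      rcases hcase with ⟨_, h⟩ | ⟨_, h⟩
      · exact hqC h
      · exact hqT h
    rw [heq]
    simp [hqC]
end
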